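/- Let T and T' be multicast trees spanning M in G such that lv(T) ⊆ M, and let ρ ≥ 0 be a real number with |in(T)| ≤ ρ·|in(T')|. Then Ψ(T) ≤ (ρ + 1)·Ψ(T'). -/

import Mathlib

namespace MEGCOM

/-- The set of internal nodes (degree at least 2) of a subgraph `T`. -/
def inn {V : Type*} {G : SimpleGraph V} (T : G.Subgraph) : Set V :=
  {v | v ∈ T.verts ∧ 2 ≤ (T.neighborSet v).ncard}

/-- The set of degree-one nodes of a subgraph `T`. -/
def lv {V : Type*} {G : SimpleGraph V} (T : G.Subgraph) : Set V :=
  {v | v ∈ T.verts ∧ (T.neighborSet v).ncard = 1}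

/-- `T` is a multicast tree spanning the member set `M`. -/
def IsMulticastTree {V : Type*} (G : SimpleGraph V) (M : Finset V) (T : G.Subgraph) : Prop :=
  T.coe.IsTree ∧ ↑M ⊆ T.verts

/-- Total energy `Ψ(T)` of a group communication session using `T` (fixed tx power). -/
noncomputable def psi {V : Type*} [Fintype V] {G : SimpleGraph V} (T : G.Subgraph)
    (M : Finset V) (p : V → ℕ) (εs εr : ℝ) : ℝ :=
  (∑ u ∈ M, (p u : ℝ)) * ((inn T).ncard : ℝ) * εs
    + (∑ᶠ u ∈ lv T, (p u : ℝ)) * εs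
    + (∑ u ∈ M, (p u : ℝ)) * ((T.verts.ncard : ℝ) - 1) * εr

section Aux

variable {V : Type*} [Fintype V] {G : SimpleGraph V}

lemma mindeg (T : G.Subgraph) (hc : T.coe.Connected) (h2 : 2 ≤ T.verts.ncard)
    {v : V} (hv : v ∈ T.verts) : 1 ≤ (T.neighborSet v).ncard := by
  obtain ⟨w, hw, hne⟩ := Set.exists_ne_of_one_lt_ncard (s := T.verts) (by omega) v
  have r : T.coe.Reachable ⟨v, hv⟩ ⟨w, hw⟩ := hc ⟨v, hv⟩ ⟨w, hw⟩
  obtain ⟨p⟩ := r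
  have hnn : ¬ p.Nil := SimpleGraph.Walk.not_nil_of_ne (by simp [Subtype.ext_iff, hne.symm])
  have hadj : T.coe.Adj ⟨v, hv⟩ (p.getVert 1) := SimpleGraph.Walk.adj_snd hnn
  have hmem : (↑(p.getVert 1) : V) ∈ T.neighborSet v := hadj
  exact (Set.ncard_pos (Set.toFinite _)).mpr ⟨_, hmem⟩

lemma handshake (T : G.Subgraph) (hT : T.coe.IsTree) :
    ∑ v ∈ (Set.toFinite T.verts).toFinset, (T.neighborSet v).ncard
      = 2 * (T.verts.ncard - 1) := by
  classical
  haveI : Fintype ↥T.verts := (Set.toFinite _).fintype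
  have hdeg : ∀ (v : T.verts) (inst : Fintype (T.coe.neighborSet v)),
      @SimpleGraph.degree _ T.coe v inst = (T.neighborSet ↑v).ncard := by
    intro v inst
    rw [← @SimpleGraph.card_neighborSet_eq_degree _ _ _ inst, ← Nat.card_coe_set_eq,
      Nat.card_eq_fintype_card]
    exact Fintype.card_congr (SimpleGraph.Subgraph.coeNeighborSetEquiv v)
  have h2 := T.coe.sum_degrees_eq_twice_card_edges
  have h3 := hT.card_edgeFinset
  have h4 : Fintype.card ↥T.verts = T.verts.ncard := by
    rw [Set.ncard_eq_toFinset_card', Set.toFinset_card]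
  have h2' : ∑ v : T.verts, (T.neighborSet ↑v).ncard = 2 * T.coe.edgeFinset.card := by
    rw [← h2]
    exact Finset.sum_congr rfl fun v _ => (hdeg v _).symm
  have h1 : ∑ v ∈ (Set.toFinite T.verts).toFinset, (T.neighborSet v).ncard
      = ∑ v : T.verts, (T.neighborSet ↑v).ncard := by
    rw [Set.Finite.toFinset_eq_toFinset, ← Finset.sum_set_coe]
  rw [h1, h2']
  omega

lemma single_vertex (T : G.Subgraph) (hn : T.verts.ncard = 1) :
    inn T = ∅ ∧ lv T = ∅ := by
  have hdeg : ∀ v ∈ T.verts, (T.neighborSet v).ncard = 0 := by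
    intro v hv
    by_contra h
    have hne : (T.neighborSet v).Nonempty := Set.nonempty_of_ncard_ne_zero h
    obtain ⟨w, hw⟩ := hne
    have hadj : T.Adj v w := hw
    have hwv : w ∈ T.verts := hadj.snd_mem
    have hne2 : w ≠ v := (hadj.adj_sub).ne'
    have : 2 ≤ T.verts.ncard := by
      have hsub : ({w, v} : Set V) ⊆ T.verts := by
        intro x hx; rcases hx with h | h <;> simp_all
      calc 2 = ({w, v} : Set V).ncard := by rw [Set.ncard_pair hne2]
           _ ≤ T.verts.ncard := Set.ncard_le_ncard hsub (Set.toFinite _)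
    omega
  constructor
  all_goals
    ext v
    simp only [inn, lv, Set.mem_setOf_eq, Set.mem_empty_iff_false, iff_false]
    rintro ⟨hv, hd⟩
    have := hdeg v hv
    omega

lemma partition_leaves (T : G.Subgraph) (hT : T.coe.IsTree) (h2 : 2 ≤ T.verts.ncard) :
    (inn T).ncard + (lv T).ncard = T.verts.ncard ∧ 2 ≤ (lv T).ncard := by
  classical
  set F := (Set.toFinite T.verts).toFinset with hF
  set L : Finset V := F.filter (fun v => (T.neighborSet v).ncard = 1) with hL
  set I : Finset V := F.filter (fun v => ¬ (T.neighborSet v).ncard = 1) with hI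
  have hmemF : ∀ v, v ∈ F ↔ v ∈ T.verts := fun v => Set.Finite.mem_toFinset _
  have hdeg1 : ∀ v ∈ F, 1 ≤ (T.neighborSet v).ncard := fun v hv =>
    mindeg T hT.isConnected h2 ((hmemF v).mp hv)
  have hIdeg : ∀ v ∈ I, 2 ≤ (T.neighborSet v).ncard := by
    intro v hv
    rw [hI, Finset.mem_filter] at hv
    have := hdeg1 v hv.1
    omega
  have hsplit : L.card + I.card = F.card := by
    rw [hL, hI]; exact Finset.card_filter_add_card_filter_not _
  have hFcard : F.card = T.verts.ncard := (Set.ncard_eq_toFinset_card _ _).symm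
  have hsum : ∑ v ∈ F, (T.neighborSet v).ncard = 2 * (T.verts.ncard - 1) := handshake T hT
  have hsum_split : ∑ v ∈ L, (T.neighborSet v).ncard + ∑ v ∈ I, (T.neighborSet v).ncard
      = ∑ v ∈ F, (T.neighborSet v).ncard := by
    rw [hL, hI]; exact Finset.sum_filter_add_sum_filter_not _ _ _
  have hLsum : ∑ v ∈ L, (T.neighborSet v).ncard = L.card := by
    rw [Finset.sum_congr rfl (fun v hv => (Finset.mem_filter.mp hv).2)]
    exact (Finset.card_eq_sum_ones L).symm
  have hIsum : 2 * I.card ≤ ∑ v ∈ I, (T.neighborSet v).ncard := by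
    calc 2 * I.card = ∑ _v ∈ I, 2 := by rw [Finset.sum_const, smul_eq_mul, mul_comm]
    _ ≤ ∑ v ∈ I, (T.neighborSet v).ncard := Finset.sum_le_sum hIdeg
  have hLcard : 2 ≤ L.card := by omega
  have hlvL : lv T = ↑L := by
    ext v
    simp only [lv, Set.mem_setOf_eq, hL, Finset.coe_filter, hmemF v]
  have hinnI : inn T = ↑I := by
    ext v
    simp only [inn, Set.mem_setOf_eq, hI, Finset.coe_filter, hmemF v]
    constructor
    · rintro ⟨hv, hd⟩; exact ⟨hv, by omega⟩
    · rintro ⟨hv, hd⟩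
      have := hdeg1 v ((hmemF v).mpr hv)
      exact ⟨hv, by omega⟩
  rw [hlvL, hinnI, Set.ncard_coe_finset, Set.ncard_coe_finset]
  omega

end Aux

theorem stmt3 {V : Type*} [Fintype V] {G : SimpleGraph V} (M : Finset V)
    (p : V → ℕ) (hp : ∀ u ∉ M, p u = 0) (εs εr : ℝ)
    (hεs : 0 < εs) (hεr : 0 < εr) (hrs : εr ≤ εs)
    (T T' : G.Subgraph) (hT : IsMulticastTree G M T) (hT' : IsMulticastTree G M T')
    (hlv : lv T ⊆ ↑M) (ρ : ℝ) (hρ : 0 ≤ ρ)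
    (hin : ((inn T).ncard : ℝ) ≤ ρ * ((inn T').ncard : ℝ)) :
    psi T M p εs εr ≤ (ρ + 1) * psi T' M p εs εr := by
  classical
  obtain ⟨htr, hMT⟩ := hT
  obtain ⟨htr', hMT'⟩ := hT'
  set k := ∑ u ∈ M, (p u : ℝ) with hk
  have hk0 : 0 ≤ k := Finset.sum_nonneg fun u _ => by positivity
  -- tree nonemptiness
  have hn1 : 1 ≤ T.verts.ncard := by
    have h := htr.isConnected.nonempty
    exact (Set.ncard_pos (Set.toFinite _)).mpr (Set.nonempty_coe_sort.mp h)
  have hn1' : 1 ≤ T'.verts.ncard := by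
    have h := htr'.isConnected.nonempty
    exact (Set.ncard_pos (Set.toFinite _)).mpr (Set.nonempty_coe_sort.mp h)
  -- cardinality comparisons
  have hMn' : M.card ≤ T'.verts.ncard := by
    have := Set.ncard_le_ncard hMT' (Set.toFinite _)
    simpa using this
  have hlM : (lv T).ncard ≤ M.card := by
    have := Set.ncard_le_ncard hlv (Set.toFinite _)
    simpa using this
  -- leaf sums as finset sums
  have hLT : ∑ᶠ u ∈ lv T, (p u : ℝ) = ∑ u ∈ (Set.toFinite (lv T)).toFinset, (p u : ℝ) := by
    have h := finsum_mem_coe_finset (s := (Set.toFinite (lv T)).toFinset)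
      (f := fun u => (p u : ℝ))
    rw [Set.Finite.coe_toFinset] at h
    exact h
  have hLT' : ∑ᶠ u ∈ lv T', (p u : ℝ) = ∑ u ∈ (Set.toFinite (lv T')).toFinset, (p u : ℝ) := by
    have h := finsum_mem_coe_finset (s := (Set.toFinite (lv T')).toFinset)
      (f := fun u => (p u : ℝ))
    rw [Set.Finite.coe_toFinset] at h
    exact h
  set L := ∑ u ∈ (Set.toFinite (lv T)).toFinset, (p u : ℝ) with hLdef
  set L' := ∑ u ∈ (Set.toFinite (lv T')).toFinset, (p u : ℝ) with hLdef'
  have hL'_0 : 0 ≤ L' := Finset.sum_nonneg fun u _ => by positivity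
  have hL_le : L ≤ k := by
    apply Finset.sum_le_sum_of_subset_of_nonneg
    · intro x hx
      exact hlv ((Set.Finite.mem_toFinset _).mp hx)
    · intro u _ _; positivity
  by_cases hn'1 : T'.verts.ncard = 1
  · -- degenerate case: T' is a single vertex
    have hM1 : M.card ≤ 1 := by omega
    have hnT : T.verts.ncard = 1 := by
      by_contra h
      have h2 : 2 ≤ T.verts.ncard := by omega
      have := (partition_leaves T htr h2).2
      omega
    obtain ⟨hie, hle⟩ := single_vertex T hnT
    obtain ⟨hie', hle'⟩ := single_vertex T' hn'1
    simp only [psi, ← hk, hie, hle, hie', hle', hnT, hn'1, Set.ncard_empty,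
      finsum_mem_empty, Nat.cast_zero, Nat.cast_one, sub_self, mul_zero, zero_mul,
      add_zero, zero_add, le_refl]
  · -- main case
    have h2' : 2 ≤ T'.verts.ncard := by omega
    obtain ⟨hpart', hlv2'⟩ := partition_leaves T' htr' h2'
    have hi'n : ((inn T').ncard : ℝ) ≤ (T'.verts.ncard : ℝ) - 1 := by
      have : (inn T').ncard + 1 ≤ T'.verts.ncard := by omega
      have := (Nat.cast_le (α := ℝ)).mpr this
      push_cast at this
      linarith
    have h3 : (T.verts.ncard : ℝ) - 1
        ≤ ρ * ((inn T').ncard : ℝ) + ((T'.verts.ncard : ℝ) - 1) := by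
      have hρi' : 0 ≤ ρ * ((inn T').ncard : ℝ) := mul_nonneg hρ (Nat.cast_nonneg _)
      by_cases hnT : T.verts.ncard = 1
      · rw [hnT]
        have : (2:ℝ) ≤ (T'.verts.ncard : ℝ) := by exact_mod_cast h2'
        norm_num
        linarith
      · have h2T : 2 ≤ T.verts.ncard := by omega
        obtain ⟨hpartT, _⟩ := partition_leaves T htr h2T
        have hc1 : ((inn T).ncard : ℝ) + ((lv T).ncard : ℝ) = (T.verts.ncard : ℝ) := by
          exact_mod_cast congrArg (Nat.cast : ℕ → ℝ) hpartT
        have hc2 : ((lv T).ncard : ℝ) ≤ (T'.verts.ncard : ℝ) := by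
          exact_mod_cast Nat.cast_le.mpr (le_trans hlM hMn')
        linarith
    have h5 : k ≤ k * ((inn T').ncard : ℝ) + L' := by
      by_cases hi'0 : (inn T').ncard = 0
      · have hinn_empty : inn T' = ∅ := (Set.ncard_eq_zero (Set.toFinite _)).mp hi'0
        have hsub : (↑M : Set V) ⊆ lv T' := by
          intro v hv
          have hvv : v ∈ T'.verts := hMT' hv
          have hd1 : 1 ≤ (T'.neighborSet v).ncard := mindeg T' htr'.isConnected h2' hvv
          have hnotinn : v ∉ inn T' := by rw [hinn_empty]; exact Set.notMem_empty v
          have hle2 : ¬ 2 ≤ (T'.neighborSet v).ncard := fun h => hnotinn ⟨hvv, h⟩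
          exact ⟨hvv, by omega⟩
        have hMsub : M ⊆ (Set.toFinite (lv T')).toFinset := fun x hx =>
          (Set.Finite.mem_toFinset _).mpr (hsub hx)
        have hkL' : k ≤ L' :=
          Finset.sum_le_sum_of_subset_of_nonneg hMsub (fun u _ _ => by positivity)
        rw [hi'0]
        push_cast
        linarith
      · have h1i : (1:ℝ) ≤ ((inn T').ncard : ℝ) := by
          exact_mod_cast Nat.one_le_iff_ne_zero.mpr hi'0
        nlinarith
    -- products
    have B1 : k * ((inn T).ncard : ℝ) * εs ≤ ρ * (k * ((inn T').ncard : ℝ) * εs) := by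
      have h := mul_le_mul_of_nonneg_left hin (mul_nonneg hk0 hεs.le)
      calc k * ((inn T).ncard : ℝ) * εs = (k * εs) * ((inn T).ncard : ℝ) := by ring
        _ ≤ (k * εs) * (ρ * ((inn T').ncard : ℝ)) := h
        _ = ρ * (k * ((inn T').ncard : ℝ) * εs) := by ring
    have B2 : L * εs ≤ k * εs := mul_le_mul_of_nonneg_right hL_le hεs.le
    have B3 : k * ((T.verts.ncard : ℝ) - 1) * εr
        ≤ ρ * (k * ((inn T').ncard : ℝ) * εr) + k * ((T'.verts.ncard : ℝ) - 1) * εr := by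
      have h := mul_le_mul_of_nonneg_left h3 (mul_nonneg hk0 hεr.le)
      calc k * ((T.verts.ncard : ℝ) - 1) * εr
          = (k * εr) * ((T.verts.ncard : ℝ) - 1) := by ring
        _ ≤ (k * εr) * (ρ * ((inn T').ncard : ℝ) + ((T'.verts.ncard : ℝ) - 1)) := h
        _ = ρ * (k * ((inn T').ncard : ℝ) * εr) + k * ((T'.verts.ncard : ℝ) - 1) * εr := by
            ring
    have B4 : ρ * (k * ((inn T').ncard : ℝ) * εr)
        ≤ ρ * (k * ((T'.verts.ncard : ℝ) - 1) * εr) := by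
      have h := mul_le_mul_of_nonneg_left hi'n (mul_nonneg (mul_nonneg hρ hk0) hεr.le)
      calc ρ * (k * ((inn T').ncard : ℝ) * εr)
          = (ρ * k * εr) * ((inn T').ncard : ℝ) := by ring
        _ ≤ (ρ * k * εr) * ((T'.verts.ncard : ℝ) - 1) := by
            exact mul_le_mul_of_nonneg_left hi'n (mul_nonneg (mul_nonneg hρ hk0) hεr.le)
        _ = ρ * (k * ((T'.verts.ncard : ℝ) - 1) * εr) := by ring
    have B5 : k * εs ≤ k * ((inn T').ncard : ℝ) * εs + L' * εs := by
      have h := mul_le_mul_of_nonneg_right h5 hεs.le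
      calc k * εs ≤ (k * ((inn T').ncard : ℝ) + L') * εs := h
        _ = k * ((inn T').ncard : ℝ) * εs + L' * εs := by ring
    have B6 : 0 ≤ ρ * (L' * εs) := mul_nonneg hρ (mul_nonneg hL'_0 hεs.le)
    have B7 : 0 ≤ k * ((T'.verts.ncard : ℝ) - 1) * εr := by
      have h1 : (1:ℝ) ≤ (T'.verts.ncard : ℝ) := by exact_mod_cast hn1'
      have h0 : 0 ≤ (T'.verts.ncard : ℝ) - 1 := by linarith
      exact mul_nonneg (mul_nonneg hk0 h0) hεr.le
    simp only [psi, ← hk]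
    rw [hLT, hLT']
    linarith [B1, B2, B3, B4, B5, B6, B7]

end MEGCOM
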